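/- Let n < m ≤ N, Φ ∈ ℝ^{N×m} with ΦᵀΦ = I_m, S ∈ ℝ^{N×n} with SᵀS = I_n, M := SᵀΦ with MMᵀ invertible, M⁺ := Mᵀ(MMᵀ)⁻¹, and Z ∈ ℝ^{m×(m−n)} with ZᵀZ = I_{m−n} and MZ = 0. Fix u ∈ ℝ^N and set ẑ := ZZᵀΦᵀu. Then ẑ is the unique minimizer over all z ∈ ℝ^m with Mz = 0 of the reconstruction error ‖ΦM⁺Sᵀu + Φz − u‖: for every z ∈ ker M, ‖ΦM⁺Sᵀu + Φẑ − u‖ ≤ ‖ΦM⁺Sᵀu + Φz − u‖, with equality only if z = ẑ. -/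
import Mathlib


open Matrix RealInnerProductSpace

/-- A matrix acting on Euclidean space. -/
noncomputable def aV {a b : ℕ} (A : Matrix (Fin a) (Fin b) ℝ)
    (x : EuclideanSpace ℝ (Fin b)) : EuclideanSpace ℝ (Fin a) :=
  Matrix.toEuclideanLin A x

lemma aV_mul {a b c : ℕ} (A : Matrix (Fin a) (Fin b) ℝ) (B : Matrix (Fin b) (Fin c) ℝ)
    (x : EuclideanSpace ℝ (Fin c)) : aV (A * B) x = aV A (aV B x) := by
  simp [aV, Matrix.toEuclideanLin_apply, Matrix.mulVec_mulVec]

lemma aV_one {a : ℕ} (x : EuclideanSpace ℝ (Fin a)) : aV (1 : Matrix (Fin a) (Fin a) ℝ) x = x := by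
  simp [aV, Matrix.toEuclideanLin_apply]

lemma proj_ker {m n : ℕ} (M : Matrix (Fin n) (Fin m) ℝ) (hMM : IsUnit (M * Mᵀ))
    (Z : Matrix (Fin m) (Fin (m - n)) ℝ) (hZ : Zᵀ * Z = 1) (hMZ : M * Z = 0) (hnm : n ≤ m) :
    ∀ w : EuclideanSpace ℝ (Fin m), aV M w = 0 → aV (Z * Zᵀ) w = w := by
  set f := Matrix.toEuclideanLin M with hf
  set g := Matrix.toEuclideanLin Z with hg
  have hginj : Function.Injective g := by
    intro x y hxy
    have : aV Zᵀ (aV Z x) = aV Zᵀ (aV Z y) := by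
      simp only [aV, hg] at hxy ⊢; rw [hxy]
    rwa [← aV_mul, ← aV_mul, hZ, aV_one, aV_one] at this
  have hfsurj : Function.Surjective f := by
    intro y
    refine ⟨Matrix.toEuclideanLin (Mᵀ * (M * Mᵀ)⁻¹) y, ?_⟩
    have h1 : M * (Mᵀ * (M * Mᵀ)⁻¹) = 1 := by
      rw [← Matrix.mul_assoc, Matrix.mul_nonsing_inv _ ((Matrix.isUnit_iff_isUnit_det _).mp hMM)]
    have := aV_mul M (Mᵀ * (M * Mᵀ)⁻¹) y
    rw [h1, aV_one] at this
    simpa [aV, hf] using this.symm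
  have hle : LinearMap.range g ≤ LinearMap.ker f := by
    rintro _ ⟨y, rfl⟩
    have := aV_mul M Z y
    rw [hMZ] at this
    simp only [LinearMap.mem_ker]
    simp only [aV, hf, hg] at this ⊢
    rw [← this]; simp [aV, Matrix.toEuclideanLin_apply]
  have hdim1 : Module.finrank ℝ (LinearMap.range g) = m - n := by
    rw [LinearMap.finrank_range_of_inj hginj, finrank_euclideanSpace_fin]
  have hdim2 : Module.finrank ℝ (LinearMap.ker f) = m - n := by
    have h := LinearMap.finrank_range_add_finrank_ker f
    rw [LinearMap.range_eq_top.mpr hfsurj, finrank_top, finrank_euclideanSpace_fin,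
      finrank_euclideanSpace_fin] at h
    omega
  have heq : LinearMap.range g = LinearMap.ker f :=
    Submodule.eq_of_le_of_finrank_eq hle (by rw [hdim1, hdim2])
  intro w hw
  have hwk : w ∈ LinearMap.ker f := by simpa [aV, hf] using hw
  rw [← heq] at hwk
  obtain ⟨y, rfl⟩ := hwk
  have : aV (Z * Zᵀ) (aV Z y) = aV Z y := by
    rw [← aV_mul, Matrix.mul_assoc, hZ, Matrix.mul_one]
  simpa [aV, hg] using this

lemma inner_aV {a b : ℕ} (A : Matrix (Fin a) (Fin b) ℝ) (x : EuclideanSpace ℝ (Fin b))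
    (y : EuclideanSpace ℝ (Fin a)) : ⟪aV A x, y⟫ = ⟪x, aV Aᵀ y⟫ := by
  have h := Matrix.toEuclideanLin_conjTranspose_eq_adjoint A
  simp only [aV]
  rw [show Aᵀ = Aᴴ from A.conjTranspose_eq_transpose_of_trivial.symm, h]
  rw [LinearMap.adjoint_inner_right]

lemma aV_sub {a b : ℕ} (A : Matrix (Fin a) (Fin b) ℝ) (x y : EuclideanSpace ℝ (Fin b)) :
    aV A (x - y) = aV A x - aV A y := by simp [aV]

lemma aV_zero {a b : ℕ} (A : Matrix (Fin a) (Fin b) ℝ) :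
    aV A (0 : EuclideanSpace ℝ (Fin b)) = 0 := by simp [aV]

lemma aV_norm {a b : ℕ} (A : Matrix (Fin a) (Fin b) ℝ) (hA : Aᵀ * A = 1)
    (x : EuclideanSpace ℝ (Fin b)) : ‖aV A x‖ = ‖x‖ := by
  have h : ⟪aV A x, aV A x⟫ = ⟪x, x⟫ := by
    rw [inner_aV, ← aV_mul, hA, aV_one]
  have h2 : ‖aV A x‖ * ‖aV A x‖ = ‖x‖ * ‖x‖ := by
    rw [← real_inner_self_eq_norm_mul_norm, ← real_inner_self_eq_norm_mul_norm, h]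
  nlinarith [norm_nonneg (aV A x), norm_nonneg x]


/-- Optimal kernel vector (Lemma 3.7): `ẑ = ZZᵀΦᵀu` is the unique minimizer over
`z ∈ ker M` of the S-DEIM reconstruction error `‖ΦM⁺Sᵀu + Φz − u‖`. -/
theorem optimal_kernel_vector (N m n : ℕ) (hnm : n < m) (hmN : m ≤ N)
    (Φ : Matrix (Fin N) (Fin m) ℝ) (S : Matrix (Fin N) (Fin n) ℝ)
    (hΦ : Φᵀ * Φ = 1) (hS : Sᵀ * S = 1)
    (M : Matrix (Fin n) (Fin m) ℝ) (hM : M = Sᵀ * Φ)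
    (hMM : IsUnit (M * Mᵀ))
    (Mplus : Matrix (Fin m) (Fin n) ℝ) (hMp : Mplus = Mᵀ * (M * Mᵀ)⁻¹)
    (Z : Matrix (Fin m) (Fin (m - n)) ℝ) (hZ : Zᵀ * Z = 1) (hMZ : M * Z = 0)
    (u : EuclideanSpace ℝ (Fin N))
    (zhat : EuclideanSpace ℝ (Fin m)) (hzhat : zhat = aV (Z * Zᵀ * Φᵀ) u) :
    ∀ z : EuclideanSpace ℝ (Fin m), aV M z = 0 →
      ‖aV (Φ * Mplus * Sᵀ) u + aV Φ zhat - u‖ ≤ ‖aV (Φ * Mplus * Sᵀ) u + aV Φ z - u‖ ∧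
      (‖aV (Φ * Mplus * Sᵀ) u + aV Φ zhat - u‖ = ‖aV (Φ * Mplus * Sᵀ) u + aV Φ z - u‖ →
        z = zhat) := by
  intro z hz
  have key := proj_ker M hMM Z hZ hMZ hnm.le
  -- zhat is in the kernel
  have hMzhat : aV M zhat = 0 := by
    rw [hzhat, ← aV_mul, show M * (Z * Zᵀ * Φᵀ) = 0 by
      rw [← Matrix.mul_assoc, ← Matrix.mul_assoc, hMZ, Matrix.zero_mul, Matrix.zero_mul]]
    simp [aV, Matrix.toEuclideanLin_apply]
  set Eh := aV (Φ * Mplus * Sᵀ) u + aV Φ zhat - u with hEh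
  -- orthogonality of the residual to Φ·(ker M)
  have orth : ∀ w : EuclideanSpace ℝ (Fin m), aV M w = 0 → ⟪Eh, aV Φ w⟫ = 0 := by
    intro w hw
    rw [real_inner_comm, inner_aV]
    have expand : aV Φᵀ Eh
        = aV (Mplus * Sᵀ) u + zhat - aV Φᵀ u := by
      rw [hEh]
      have : aV Φᵀ (aV (Φ * Mplus * Sᵀ) u + aV Φ zhat - u)
          = aV Φᵀ (aV (Φ * Mplus * Sᵀ) u) + aV Φᵀ (aV Φ zhat) - aV Φᵀ u := by
        simp [aV]
      rw [this, ← aV_mul, ← aV_mul, ← Matrix.mul_assoc, ← Matrix.mul_assoc, hΦ,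
        Matrix.one_mul, aV_one]
    rw [expand]
    have h1 : ⟪w, aV (Mplus * Sᵀ) u⟫ = 0 := by
      rw [real_inner_comm, inner_aV]
      have : (Mplus * Sᵀ)ᵀ = S * ((M * Mᵀ)⁻¹ * M) := by
        rw [Matrix.transpose_mul, Matrix.transpose_transpose, hMp, Matrix.transpose_mul,
          Matrix.transpose_transpose, Matrix.transpose_nonsing_inv, Matrix.transpose_mul,
          Matrix.transpose_transpose]
      rw [this, aV_mul, aV_mul, hw, aV_zero, aV_zero, inner_zero_right]
    have h2 : ⟪w, zhat⟫ = ⟪w, aV Φᵀ u⟫ := by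
      rw [hzhat, aV_mul, real_inner_comm, inner_aV,
        Matrix.transpose_mul, Matrix.transpose_transpose, key w hw, real_inner_comm]
    rw [inner_sub_right, inner_add_right, h1, h2]
    ring
  -- decomposition
  have hdecomp : aV (Φ * Mplus * Sᵀ) u + aV Φ z - u = Eh + aV Φ (z - zhat) := by
    rw [hEh, aV_sub]
    abel
  have hwker : aV M (z - zhat) = 0 := by rw [aV_sub, hz, hMzhat, sub_zero]
  have hpyth : ‖aV (Φ * Mplus * Sᵀ) u + aV Φ z - u‖ ^ 2 = ‖Eh‖ ^ 2 + ‖z - zhat‖ ^ 2 := by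
    rw [hdecomp, norm_add_sq_real, orth _ hwker, aV_norm Φ hΦ]
    ring
  constructor
  · nlinarith [norm_nonneg (aV (Φ * Mplus * Sᵀ) u + aV Φ z - u), norm_nonneg Eh,
      sq_nonneg ‖z - zhat‖]
  · intro heq
    have : ‖z - zhat‖ ^ 2 = 0 := by rw [← heq] at hpyth; nlinarith
    have : z - zhat = 0 := by
      rwa [pow_eq_zero_iff (by norm_num), norm_eq_zero] at this
    exact sub_eq_zero.mp this
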